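/- Let V₁ and V₂ be nonempty finite types, v* ∈ V₁, N ≥ 1, and D a divergence on S(V₁) that is jointly convex. Fix Ψ : V₂ → S(V₁) and weights p 0, …, p N ∈ S(V₂), and set F i := ∑ v ∈ V₂, p i (v) • Ψ(v) ∈ S(V₁). Assume F i (v*) > F (i−1) (v*) for all 1 ≤ i ≤ N. Then there exists ε₀ > 0 such that for every family R assigning to each 0 ≤ i ≤ N and v ∈ V₂ a distribution R i v ∈ S(V₁), if ∑ v ∈ V₂, p i (v) · D (Ψ(v)) (R i v) ≤ ε₀ for every 0 ≤ i ≤ N, then the mixtures G i := ∑ v ∈ V₂, p i (v) • R i v satisfy G i (v*) > G (i−1) (v*) for all 1 ≤ i ≤ N. -/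

import Mathlib

open scoped BigOperators

/-- A divergence on the probability simplex `stdSimplex ℝ W`: continuous (in the
subspace topology on the simplex), nonnegative, and vanishing exactly on the diagonal. -/
def IsDivergence {W : Type*} [Fintype W] (D : (W → ℝ) → (W → ℝ) → ℝ) : Prop :=
  ContinuousOn (fun pq : (W → ℝ) × (W → ℝ) => D pq.1 pq.2)
      (stdSimplex ℝ W ×ˢ stdSimplex ℝ W) ∧
    (∀ p ∈ stdSimplex ℝ W, ∀ q ∈ stdSimplex ℝ W, 0 ≤ D p q) ∧
    (∀ p ∈ stdSimplex ℝ W, ∀ q ∈ stdSimplex ℝ W, (D p q = 0 ↔ p = q))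

/-- `D` is jointly convex on the simplex. -/
def JointlyConvexDiv {W : Type*} [Fintype W] (D : (W → ℝ) → (W → ℝ) → ℝ) : Prop :=
  ∀ p₁ ∈ stdSimplex ℝ W, ∀ p₂ ∈ stdSimplex ℝ W, ∀ q₁ ∈ stdSimplex ℝ W,
    ∀ q₂ ∈ stdSimplex ℝ W, ∀ t ∈ Set.Icc (0 : ℝ) 1,
      D (t • p₁ + (1 - t) • p₂) (t • q₁ + (1 - t) • q₂) ≤
        t * D p₁ q₁ + (1 - t) * D p₂ q₂

/-- **Multiple lines of evidence transfer through embed-calibration (science).**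
If the embedded prediction distributions `F i = ∑ v, p i v • Ψ v` assign strictly
increasing probability to `vstar`, then there is `ε₀ > 0` such that for any family
`R i v` of universe response distributions satisfying the embed-calibration bound
`∑ v, p i v * D (Ψ v) (R i v) ≤ ε₀`, the mixtures `G i = ∑ v, p i v • R i v`
also assign strictly increasing probability to `vstar`. -/
theorem multiple_evidence_embed_calibration_science
    {V₁ V₂ : Type*} [Fintype V₁] [Nonempty V₁] [Fintype V₂] [Nonempty V₂]
    (vstar : V₁) (N : ℕ) (hN : 1 ≤ N)
    (D : (V₁ → ℝ) → (V₁ → ℝ) → ℝ) (hD : IsDivergence D) (hDconv : JointlyConvexDiv D)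
    (Ψ : V₂ → V₁ → ℝ) (hΨ : ∀ v, Ψ v ∈ stdSimplex ℝ V₁)
    (p : ℕ → V₂ → ℝ) (hp : ∀ i ≤ N, p i ∈ stdSimplex ℝ V₂)
    (F : ℕ → V₁ → ℝ) (hFdef : ∀ i, F i = ∑ v : V₂, p i v • Ψ v)
    (hmono : ∀ i, 1 ≤ i → i ≤ N → F (i - 1) vstar < F i vstar) :
    ∃ ε₀ : ℝ, 0 < ε₀ ∧
      ∀ R : ℕ → V₂ → V₁ → ℝ, (∀ i ≤ N, ∀ v : V₂, R i v ∈ stdSimplex ℝ V₁) →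
        (∀ i ≤ N, ∑ v : V₂, p i v * D (Ψ v) (R i v) ≤ ε₀) →
        ∀ i, 1 ≤ i → i ≤ N →
          (∑ v : V₂, p (i - 1) v • R (i - 1) v) vstar <
            (∑ v : V₂, p i v • R i v) vstar := by

  classical
  obtain ⟨hDcont, hDnonneg, hDeq⟩ := hD
  set S := stdSimplex ℝ V₁ with hS
  have hIcc : (Finset.Icc 1 N).Nonempty := ⟨1, by simp [hN]⟩
  set δ : ℝ := ((Finset.Icc 1 N).inf' hIcc fun i => F i vstar - F (i - 1) vstar) / 2
    with hδdef
  have hδpos : 0 < δ := by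
    apply div_pos _ two_pos
    rw [Finset.lt_inf'_iff]
    intro i hi
    rw [Finset.mem_Icc] at hi
    exact sub_pos.mpr (hmono i hi.1 hi.2)
  have hgap : ∀ i, 1 ≤ i → i ≤ N → 2 * δ ≤ F i vstar - F (i - 1) vstar := by
    intro i h1 h2
    have := Finset.inf'_le (fun i => F i vstar - F (i - 1) vstar)
      (Finset.mem_Icc.mpr ⟨h1, h2⟩)
    rw [hδdef]; linarith
  -- uniform ε₀ from compactness
  have key : ∃ ε₀ : ℝ, 0 < ε₀ ∧
      ∀ a ∈ S, ∀ b ∈ S, D a b ≤ ε₀ → |a vstar - b vstar| < δ := by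
    set K := (S ×ˢ S) ∩ {pq : (V₁ → ℝ) × (V₁ → ℝ) | δ ≤ |pq.1 vstar - pq.2 vstar|}
      with hK
    have hKcomp : IsCompact K := by
      apply ((isCompact_stdSimplex ℝ V₁).prod (isCompact_stdSimplex ℝ V₁)).inter_right
      have hc : Continuous fun pq : (V₁ → ℝ) × (V₁ → ℝ) =>
          |pq.1 vstar - pq.2 vstar| := by
        apply Continuous.abs
        exact ((continuous_apply vstar).comp continuous_fst).sub
          ((continuous_apply vstar).comp continuous_snd)
      exact isClosed_le continuous_const hc
    by_cases hKne : K.Nonempty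
    · obtain ⟨x₀, hx₀K, hx₀min⟩ :=
        hKcomp.exists_isMinOn hKne (hDcont.mono Set.inter_subset_left)
      have h1 : x₀.1 ∈ S := hx₀K.1.1
      have h2 : x₀.2 ∈ S := hx₀K.1.2
      have hne : x₀.1 ≠ x₀.2 := by
        intro h
        have h3 : δ ≤ |x₀.1 vstar - x₀.2 vstar| := hx₀K.2
        rw [h] at h3
        simp at h3
        linarith
      have hx₀pos : 0 < D x₀.1 x₀.2 := by
        rcases lt_or_eq_of_le (hDnonneg _ h1 _ h2) with h | h
        · exact h
        · exact absurd ((hDeq _ h1 _ h2).mp h.symm) hne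
      refine ⟨D x₀.1 x₀.2 / 2, by linarith, ?_⟩
      intro a ha b hb hle
      by_contra hcon
      push_neg at hcon
      have hmem : (a, b) ∈ K := ⟨⟨ha, hb⟩, hcon⟩
      have hmin : D x₀.1 x₀.2 ≤ D a b := hx₀min hmem
      linarith
    · refine ⟨1, one_pos, fun a ha b hb _ => ?_⟩
      by_contra hcon
      push_neg at hcon
      exact hKne ⟨(a, b), ⟨ha, hb⟩, hcon⟩
  obtain ⟨ε₀, hε₀pos, hε₀⟩ := key
  -- joint convexity as ConvexOn
  have hconv : ConvexOn ℝ (S ×ˢ S) (fun pq : (V₁ → ℝ) × (V₁ → ℝ) => D pq.1 pq.2) := by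
    refine ⟨(convex_stdSimplex ℝ V₁).prod (convex_stdSimplex ℝ V₁), ?_⟩
    rintro ⟨p₁, q₁⟩ ⟨hp₁, hq₁⟩ ⟨p₂, q₂⟩ ⟨hp₂, hq₂⟩ a b ha hb hab
    have hb' : b = 1 - a := by linarith
    subst hb'
    have := hDconv p₁ hp₁ p₂ hp₂ q₁ hq₁ q₂ hq₂ a ⟨ha, by linarith⟩
    simpa using this
  refine ⟨ε₀, hε₀pos, ?_⟩
  intro R hR hcal i h1 hiN
  have hclose : ∀ j ≤ N, |F j vstar - (∑ v : V₂, p j v • R j v) vstar| < δ := by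
    intro j hj
    have hpj := hp j hj
    have hFmem : F j ∈ S := by
      rw [hFdef]
      exact (convex_stdSimplex ℝ V₁).sum_mem (fun v _ => hpj.1 v) hpj.2
        (fun v _ => hΨ v)
    have hGmem : (∑ v : V₂, p j v • R j v) ∈ S :=
      (convex_stdSimplex ℝ V₁).sum_mem (fun v _ => hpj.1 v) hpj.2
        (fun v _ => hR j hj v)
    have hJ : D (F j) (∑ v : V₂, p j v • R j v) ≤
        ∑ v : V₂, p j v * D (Ψ v) (R j v) := by
      have hsum := hconv.map_sum_le (t := Finset.univ) (w := p j)
        (p := fun v => ((Ψ v, R j v) : (V₁ → ℝ) × (V₁ → ℝ)))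
        (fun v _ => hpj.1 v) hpj.2 (fun v _ => ⟨hΨ v, hR j hj v⟩)
      have heq : (∑ v : V₂, p j v • ((Ψ v, R j v) : (V₁ → ℝ) × (V₁ → ℝ))) =
          (∑ v : V₂, p j v • Ψ v, ∑ v : V₂, p j v • R j v) := by
        rw [Prod.ext_iff]
        constructor
        · rw [Prod.fst_sum]; simp
        · rw [Prod.snd_sum]; simp
      rw [heq] at hsum
      rw [hFdef]
      simpa [smul_eq_mul] using hsum
    exact hε₀ _ hFmem _ hGmem (hJ.trans (hcal j hj))
  have h1c := abs_lt.mp (hclose i hiN)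
  have h2c := abs_lt.mp (hclose (i - 1) (le_trans (Nat.sub_le i 1) hiN))
  have hg := hgap i h1 hiN
  linarith [h1c.1, h1c.2, h2c.1, h2c.2]
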